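/- The function Q : ℝ^N → ℝ defined by Q(z) = log(1 + Σ_{n=1}^N γ_n·exp(−β_n·z_n)) is strictly convex on ℝ^N. -/
import Mathlib


/-- For positive weights `γ` and positive rates `β`, the function
`Q(z) = log(1 + Σ_n γ_n exp(−β_n z_n))` is strictly convex on `ℝ^N`. -/
theorem stmt_6
    (N : ℕ) (hN : 1 ≤ N)
    (γ β : Fin N → ℝ) (hγ : ∀ n, 0 < γ n) (hβ : ∀ n, 0 < β n) :
    StrictConvexOn ℝ (Set.univ : Set (Fin N → ℝ))
      (fun z : Fin N → ℝ =>
        Real.log (1 + ∑ n, γ n * Real.exp (-(β n) * z n))) := by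
  have hpos : ∀ z : Fin N → ℝ, 0 < 1 + ∑ n, γ n * Real.exp (-(β n) * z n) := by
    intro z
    have : (0:ℝ) ≤ ∑ n, γ n * Real.exp (-(β n) * z n) :=
      Finset.sum_nonneg fun n _ => mul_nonneg (hγ n).le (Real.exp_pos _).le
    linarith
  have key : ∀ (x y : Fin N → ℝ), x ≠ y → ∀ (a b : ℝ), 0 < a → 0 < b → a + b = 1 →
      Real.log (1 + ∑ n, γ n * Real.exp (-(β n) * (a * x n + b * y n))) <
      a * Real.log (1 + ∑ n, γ n * Real.exp (-(β n) * x n)) +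
      b * Real.log (1 + ∑ n, γ n * Real.exp (-(β n) * y n)) := by
    intro x y hxy a b ha hb hab
    set A := 1 + ∑ n, γ n * Real.exp (-(β n) * x n) with hA
    set B := 1 + ∑ n, γ n * Real.exp (-(β n) * y n) with hB
    have hApos : 0 < A := hpos x
    have hBpos : 0 < B := hpos y
    set P : Option (Fin N) → ℝ := fun i =>
      match i with
      | none => -Real.log A
      | some n => Real.log (γ n) - β n * x n - Real.log A with hP
    set Q : Option (Fin N) → ℝ := fun i =>
      match i with
      | none => -Real.log B
      | some n => Real.log (γ n) - β n * y n - Real.log B with hQ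
    have hPn : ∀ n, Real.exp (P (some n)) = γ n * Real.exp (-(β n) * x n) / A := by
      intro n
      simp only [hP, Real.exp_sub, Real.exp_log hApos, Real.exp_log (hγ n), neg_mul,
        Real.exp_neg]
      ring
    have hQn : ∀ n, Real.exp (Q (some n)) = γ n * Real.exp (-(β n) * y n) / B := by
      intro n
      simp only [hQ, Real.exp_sub, Real.exp_log hBpos, Real.exp_log (hγ n), neg_mul,
        Real.exp_neg]
      ring
    have h1 : ∑ i, Real.exp (P i) = 1 := by
      rw [Fintype.sum_option]
      have : ∀ n ∈ Finset.univ, Real.exp (P (some n)) = γ n * Real.exp (-(β n) * x n) / A :=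
        fun n _ => hPn n
      rw [Finset.sum_congr rfl this, ← Finset.sum_div]
      simp only [hP]
      rw [Real.exp_neg, Real.exp_log hApos]
      field_simp
      simp only [neg_mul] at hA ⊢
      linarith [hA]
    have h2 : ∑ i, Real.exp (Q i) = 1 := by
      rw [Fintype.sum_option]
      have : ∀ n ∈ Finset.univ, Real.exp (Q (some n)) = γ n * Real.exp (-(β n) * y n) / B :=
        fun n _ => hQn n
      rw [Finset.sum_congr rfl this, ← Finset.sum_div]
      simp only [hQ]
      rw [Real.exp_neg, Real.exp_log hBpos]
      field_simp
      simp only [neg_mul] at hB ⊢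
      linarith [hB]
    have hne : ∃ i, P i ≠ Q i := by
      by_cases hAB : Real.log A = Real.log B
      · obtain ⟨n, hn⟩ : ∃ n, x n ≠ y n := Function.ne_iff.mp hxy
        refine ⟨some n, ?_⟩
        simp only [hP, hQ, hAB]
        intro h
        apply hn
        have hβn := (hβ n).ne'
        have : β n * x n = β n * y n := by linarith [sub_left_injective.eq_iff.mp h]
        exact mul_left_cancel₀ hβn this
      · exact ⟨none, fun h => hAB (neg_injective h)⟩
    -- pointwise convexity of exp
    have hterm : ∀ i, Real.exp (a * P i + b * Q i) ≤ a * Real.exp (P i) + b * Real.exp (Q i) := by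
      intro i
      have := convexOn_exp.2 (Set.mem_univ (P i)) (Set.mem_univ (Q i)) ha.le hb.le hab
      simpa [smul_eq_mul] using this
    obtain ⟨j, hj⟩ := hne
    have hjstrict : Real.exp (a * P j + b * Q j) < a * Real.exp (P j) + b * Real.exp (Q j) := by
      have := strictConvexOn_exp.2 (Set.mem_univ (P j)) (Set.mem_univ (Q j)) hj ha hb hab
      simpa [smul_eq_mul] using this
    have hS : ∑ i, Real.exp (a * P i + b * Q i) < 1 := by
      have hlt : ∑ i, Real.exp (a * P i + b * Q i) <
          ∑ i, (a * Real.exp (P i) + b * Real.exp (Q i)) :=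
        Finset.sum_lt_sum (fun i _ => hterm i) ⟨j, Finset.mem_univ j, hjstrict⟩
      have heq : ∑ i, (a * Real.exp (P i) + b * Real.exp (Q i)) = 1 := by
        rw [Finset.sum_add_distrib, ← Finset.mul_sum, ← Finset.mul_sum, h1, h2, mul_one,
          mul_one, hab]
      linarith
    set L := a * Real.log A + b * Real.log B with hL
    have hdecomp : 1 + ∑ n, γ n * Real.exp (-(β n) * (a * x n + b * y n)) =
        Real.exp L * ∑ i, Real.exp (a * P i + b * Q i) := by
      rw [Fintype.sum_option, mul_add]
      congr 1
      · rw [← Real.exp_add]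
        have : L + (a * P none + b * Q none) = 0 := by
          simp only [hP, hQ, hL]; ring
        rw [this, Real.exp_zero]
      · rw [Finset.mul_sum]
        refine Finset.sum_congr rfl fun n _ => ?_
        rw [← Real.exp_add]
        have h1 : γ n * Real.exp (-(β n) * (a * x n + b * y n)) =
            Real.exp (Real.log (γ n) + -(β n) * (a * x n + b * y n)) := by
          rw [Real.exp_add, Real.exp_log (hγ n)]
        rw [h1]
        congr 1
        simp only [hP, hQ, hL]
        linear_combination (-Real.log (γ n)) * hab
    have hfm : 1 + ∑ n, γ n * Real.exp (-(β n) * (a * x n + b * y n)) < Real.exp L := by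
      rw [hdecomp]
      calc Real.exp L * ∑ i, Real.exp (a * P i + b * Q i)
          < Real.exp L * 1 := by
            exact mul_lt_mul_of_pos_left hS (Real.exp_pos L)
        _ = Real.exp L := mul_one _
    calc Real.log (1 + ∑ n, γ n * Real.exp (-(β n) * (a * x n + b * y n)))
        < Real.log (Real.exp L) := Real.log_lt_log (hpos _) hfm
      _ = L := Real.log_exp L
  refine ⟨convex_univ, fun x _ y _ hxy a b ha hb hab => ?_⟩
  have := key x y hxy a b ha hb hab
  simpa [smul_eq_mul, Pi.add_apply, Pi.smul_apply] using this
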